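/- Let a < b be real numbers, and let β and S be as follows: β(z) = exp((1/4) Log((z − b)/(z − a))) for z ∈ ℂ \ [a, b] (principal branch), and S(z) is the 2×2 matrix with S₁₁ = S₂₂ = (β + β⁻¹)/2, S₁₂ = (β − β⁻¹)/(2i), S₂₁ = −(β − β⁻¹)/(2i). Define E(z) = S(z) for Im z > 0 and E(z) = S(z) · [[0, 1], [−1, 0]] for Im z < 0. Then E extends to a holomorphic (matrix-valued) function on ℂ \ ((−∞, a] ∪ [b, +∞)); in particular E is analytic in a neighborhood of every point of (a, b). -/

import Mathlib

open Filter Topology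

noncomputable section

/-- `β(z) = ((z−b)/(z−a))^{1/4}` via the principal branch of the logarithm. -/
def betaFn (a b : ℝ) (z : ℂ) : ℂ :=
  Complex.exp ((1 / 4 : ℂ) * Complex.log ((z - (b : ℂ)) / (z - (a : ℂ))))

/-- The outside parametrix `S^∞(z)` built from `β`. -/
def Sout (a b : ℝ) (z : ℂ) : Matrix (Fin 2) (Fin 2) ℂ :=
  !![(betaFn a b z + (betaFn a b z)⁻¹) / 2, (betaFn a b z - (betaFn a b z)⁻¹) / (2 * Complex.I);
     -((betaFn a b z - (betaFn a b z)⁻¹) / (2 * Complex.I)),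
     (betaFn a b z + (betaFn a b z)⁻¹) / 2]

def uFn (a b : ℝ) (z : ℂ) : ℂ :=
  Complex.exp ((1 / 4 : ℂ) * Complex.log (((b : ℂ) - z) / (z - (a : ℂ))))

def cQ : ℂ := Complex.exp ((Real.pi / 4 : ℝ) * Complex.I)

lemma cQ_sq : cQ ^ 2 = Complex.I := by
  rw [cQ, sq, ← Complex.exp_add]
  have : ((Real.pi / 4 : ℝ) : ℂ) * Complex.I + (Real.pi / 4 : ℝ) * Complex.I
      = (Real.pi / 2 : ℝ) * Complex.I := by push_cast; ring
  rw [this, Complex.exp_mul_I]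
  simp

lemma cQ_ne : cQ ≠ 0 := Complex.exp_ne_zero _

lemma cQ_inv : cQ⁻¹ = -Complex.I * cQ :=
  inv_eq_of_mul_eq_one_right (by linear_combination -Complex.I * cQ_sq - Complex.I_sq)

lemma uFn_ne (a b : ℝ) (z : ℂ) : uFn a b z ≠ 0 := Complex.exp_ne_zero _

lemma v_im (a b : ℝ) (z : ℂ) :
    (((b : ℂ) - z) / (z - (a : ℂ))).im = (a - b) * z.im / Complex.normSq (z - a) := by
  rw [Complex.div_im]
  simp [Complex.normSq_apply]
  ring

lemma sub_a_ne (a : ℝ) (z : ℂ) (hz : z.im ≠ 0) : z - (a : ℂ) ≠ 0 := by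
  intro h
  apply hz
  have := congrArg Complex.im h
  simpa using this

lemma log_neg_v {v : ℂ} (hv : v.im < 0) :
    Complex.log (-v) = Complex.log v + Real.pi * Complex.I := by
  rw [Complex.log, Complex.log, Complex.arg_neg_eq_arg_add_pi_of_im_neg hv, norm_neg]
  push_cast; ring

lemma log_neg_v' {v : ℂ} (hv : 0 < v.im) :
    Complex.log (-v) = Complex.log v - Real.pi * Complex.I := by
  rw [Complex.log, Complex.log, Complex.arg_neg_eq_arg_sub_pi_of_im_pos hv, norm_neg]
  push_cast; ring

lemma w_eq_neg_v (a b : ℝ) (z : ℂ) :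
    (z - (b : ℂ)) / (z - (a : ℂ)) = -(((b : ℂ) - z) / (z - (a : ℂ))) := by
  rw [← neg_div, neg_sub]

lemma beta_eq_upper (a b : ℝ) (z : ℂ) (hab : a < b) (hz : 0 < z.im) :
    betaFn a b z = cQ * uFn a b z := by
  have hza : z - (a : ℂ) ≠ 0 := sub_a_ne a z (ne_of_gt hz)
  have hv : (((b : ℂ) - z) / (z - (a : ℂ))).im < 0 := by
    rw [v_im]
    apply div_neg_of_neg_of_pos
    · nlinarith
    · exact Complex.normSq_pos.2 hza
  rw [betaFn, uFn, w_eq_neg_v, log_neg_v hv, cQ, ← Complex.exp_add]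
  congr 1
  push_cast; ring

lemma beta_eq_lower (a b : ℝ) (z : ℂ) (hab : a < b) (hz : z.im < 0) :
    betaFn a b z = cQ⁻¹ * uFn a b z := by
  have hza : z - (a : ℂ) ≠ 0 := sub_a_ne a z (ne_of_lt hz)
  have hv : 0 < (((b : ℂ) - z) / (z - (a : ℂ))).im := by
    rw [v_im]
    apply div_pos (by nlinarith) (Complex.normSq_pos.2 hza)
  have hci : cQ⁻¹ = Complex.exp (-(((Real.pi / 4 : ℝ)) * Complex.I)) := by
    rw [cQ, ← Complex.exp_neg]
  rw [betaFn, uFn, w_eq_neg_v, log_neg_v' hv, hci, ← Complex.exp_add]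
  congr 1
  push_cast; ring
def Efn (a b : ℝ) (z : ℂ) : Matrix (Fin 2) (Fin 2) ℂ :=
  !![(cQ * uFn a b z + cQ⁻¹ * (uFn a b z)⁻¹) / 2,
     (cQ⁻¹ * uFn a b z + cQ * (uFn a b z)⁻¹) / 2;
     -((cQ⁻¹ * uFn a b z + cQ * (uFn a b z)⁻¹) / 2),
     (cQ * uFn a b z + cQ⁻¹ * (uFn a b z)⁻¹) / 2]

lemma Efn_upper (a b : ℝ) (hab : a < b) (z : ℂ) (hz : 0 < z.im) :
    Efn a b z = Sout a b z := by
  have hb := beta_eq_upper a b z hab hz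
  have hu0 := uFn_ne a b z
  ext i j
  fin_cases i <;> fin_cases j <;>
    simp [Efn, Sout, hb, mul_inv, cQ_inv] <;>
    field_simp <;>
    (first
      | ring1
      | linear_combination (-cQ * (uFn a b z) ^ 2) * Complex.I_sq)
lemma Efn_lower (a b : ℝ) (hab : a < b) (z : ℂ) (hz : z.im < 0) :
    Efn a b z = Sout a b z * !![0, 1; -1, 0] := by
  have hb := beta_eq_lower a b z hab hz
  have hu0 := uFn_ne a b z
  rw [Sout, Matrix.mul_fin_two]
  ext i j
  fin_cases i <;> fin_cases j <;>
    simp only [Efn, hb, mul_inv, cQ_inv, Complex.inv_I, inv_inv, Matrix.cons_val', Matrix.cons_val_zero,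
      Matrix.cons_val_one, Matrix.head_cons, Matrix.empty_val', Matrix.cons_val_fin_one,
      Matrix.head_fin_const, Matrix.of_apply, Fin.isValue, Fin.zero_eta, Fin.mk_one] <;>
    field_simp <;>
    (first | ring1 | linear_combination (-cQ) * Complex.I_sq)

/-- the function `E` equal to `S` in the upper half plane and to
`S·[[0,1],[−1,0]]` in the lower half plane extends holomorphically to
`ℂ \ ((−∞,a] ∪ [b,∞))`; in particular it is analytic near every point of `(a,b)`. -/
theorem E_extends_holomorphically (a b : ℝ) (hab : a < b) :
    ∃ E : ℂ → Matrix (Fin 2) (Fin 2) ℂ,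
      (∀ i j : Fin 2, DifferentiableOn ℂ (fun z => E z i j)
        ({z : ℂ | z.im = 0 ∧ (z.re ≤ a ∨ b ≤ z.re)}ᶜ)) ∧
      (∀ z : ℂ, 0 < z.im → E z = Sout a b z) ∧
      (∀ z : ℂ, z.im < 0 → E z = Sout a b z * !![0, 1; -1, 0]) := by
  refine ⟨Efn a b, ?_, fun z hz => Efn_upper a b hab z hz,
    fun z hz => Efn_lower a b hab z hz⟩
  have hu : ∀ z ∈ ({z : ℂ | z.im = 0 ∧ (z.re ≤ a ∨ b ≤ z.re)}ᶜ),
      DifferentiableAt ℂ (uFn a b) z := by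
    intro z hz
    simp only [Set.mem_compl_iff, Set.mem_setOf_eq, not_and, not_or, not_le] at hz
    have hza : z - (a : ℂ) ≠ 0 := by
      rcases eq_or_ne z.im 0 with h0 | h0
      · obtain ⟨h1, h2⟩ := hz h0
        intro h
        have := congrArg Complex.re h
        simp at this
        linarith
      · exact sub_a_ne a z h0
    have hd : DifferentiableAt ℂ (fun z : ℂ => ((b : ℂ) - z) / (z - (a : ℂ))) z :=
      DifferentiableAt.div (by fun_prop) (by fun_prop) hza
    have hslit : ((b : ℂ) - z) / (z - (a : ℂ)) ∈ Complex.slitPlane := by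
      rw [Complex.mem_slitPlane_iff]
      rcases eq_or_ne z.im 0 with h0 | h0
      · left
        obtain ⟨h1, h2⟩ := hz h0
        have hzre : z = (z.re : ℂ) := by
          apply Complex.ext <;> simp [h0]
        rw [hzre]
        have : ((b : ℂ) - (z.re : ℂ)) / ((z.re : ℂ) - (a : ℂ))
            = (((b - z.re) / (z.re - a) : ℝ) : ℂ) := by push_cast; ring
        rw [this, Complex.ofReal_re]
        exact div_pos (by linarith) (by linarith)
      · right
        rw [v_im]
        exact div_ne_zero (mul_ne_zero (by linarith) h0)
          (ne_of_gt (Complex.normSq_pos.2 hza))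
    exact ((hd.clog hslit).const_mul _).cexp
  have hA : DifferentiableOn ℂ
      (fun z => (cQ * uFn a b z + cQ⁻¹ * (uFn a b z)⁻¹) / 2)
      ({z : ℂ | z.im = 0 ∧ (z.re ≤ a ∨ b ≤ z.re)}ᶜ) := fun z hz =>
    (((((hu z hz).const_mul _).add
      (((hu z hz).inv (uFn_ne a b z)).const_mul _))).div_const _).differentiableWithinAt
  have hB : DifferentiableOn ℂ
      (fun z => (cQ⁻¹ * uFn a b z + cQ * (uFn a b z)⁻¹) / 2)
      ({z : ℂ | z.im = 0 ∧ (z.re ≤ a ∨ b ≤ z.re)}ᶜ) := fun z hz =>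
    (((((hu z hz).const_mul _).add
      (((hu z hz).inv (uFn_ne a b z)).const_mul _))).div_const _).differentiableWithinAt
  intro i j
  fin_cases i <;> fin_cases j <;>
    simp only [Efn, Matrix.cons_val', Matrix.cons_val_zero, Matrix.cons_val_one,
      Matrix.head_cons, Matrix.empty_val', Matrix.cons_val_fin_one, Matrix.head_fin_const,
      Fin.isValue, Matrix.of_apply, Fin.zero_eta, Fin.mk_one]
  · exact hA
  · exact hB
  · exact hB.neg
  · exact hA
end
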